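/- Let a_1 < a_2 < ... < a_n be distinct integers and let A ∈ Mat_n(ℤ) have characteristic polynomial χ(x) = (x−a_1)(x−a_2)⋯(x−a_n). Then there exists P ∈ GL_n(ℤ) such that P A P⁻¹ is upper triangular with diagonal entries a_1, a_2, ..., a_n in that order. -/

import Mathlib

open Polynomial Matrix

def padOne {n : ℕ} (Q : Matrix (Fin n) (Fin n) ℤ) : Matrix (Fin (n+1)) (Fin (n+1)) ℤ :=
  Matrix.of (Fin.cons (Fin.cons 1 0) (fun i => Fin.cons 0 (Q i)))

@[simp] lemma padOne_zero_zero {n : ℕ} (Q : Matrix (Fin n) (Fin n) ℤ) : padOne Q 0 0 = 1 := rfl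
@[simp] lemma padOne_zero_succ {n : ℕ} (Q : Matrix (Fin n) (Fin n) ℤ) (j : Fin n) :
    padOne Q 0 j.succ = 0 := by simp [padOne]
@[simp] lemma padOne_succ_zero {n : ℕ} (Q : Matrix (Fin n) (Fin n) ℤ) (i : Fin n) :
    padOne Q i.succ 0 = 0 := by simp [padOne]
@[simp] lemma padOne_succ_succ {n : ℕ} (Q : Matrix (Fin n) (Fin n) ℤ) (i j : Fin n) :
    padOne Q i.succ j.succ = Q i j := by simp [padOne]

lemma padOne_mul {n : ℕ} (Q R : Matrix (Fin n) (Fin n) ℤ) :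
    padOne Q * padOne R = padOne (Q * R) := by
  ext i j
  induction i using Fin.cases with
  | zero =>
    induction j using Fin.cases with
    | zero => simp [Matrix.mul_apply, Fin.sum_univ_succ]
    | succ j => simp [Matrix.mul_apply, Fin.sum_univ_succ]
  | succ i =>
    induction j using Fin.cases with
    | zero => simp [Matrix.mul_apply, Fin.sum_univ_succ]
    | succ j => simp [Matrix.mul_apply, Fin.sum_univ_succ]

lemma padOne_one {n : ℕ} : padOne (1 : Matrix (Fin n) (Fin n) ℤ) = 1 := by
  ext i j
  induction i using Fin.cases with
  | zero =>
    induction j using Fin.cases with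
    | zero => simp
    | succ j => simp [Matrix.one_apply, (Fin.succ_ne_zero j).symm]
  | succ i =>
    induction j using Fin.cases with
    | zero => simp [Matrix.one_apply, Fin.succ_ne_zero i]
    | succ j => simp [Matrix.one_apply, Fin.succ_inj]

def padOneU {n : ℕ} (Q : (Matrix (Fin n) (Fin n) ℤ)ˣ) : (Matrix (Fin (n+1)) (Fin (n+1)) ℤ)ˣ :=
  ⟨padOne ↑Q, padOne ↑Q⁻¹,
    by rw [padOne_mul, Units.mul_inv, padOne_one],
    by rw [padOne_mul, Units.inv_mul, padOne_one]⟩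

lemma eval_charpoly' {m : Type*} [Fintype m] [DecidableEq m] (A : Matrix m m ℤ) (r : ℤ) :
    (A.charpoly).eval r = (r • (1 : Matrix m m ℤ) - A).det := by
  rw [Matrix.charpoly, ← coe_evalRingHom, RingHom.map_det]
  congr 1
  ext i j
  by_cases h : i = j
  · subst h
    rw [RingHom.mapMatrix_apply, Matrix.map_apply, charmatrix_apply_eq, Matrix.sub_apply,
      Matrix.smul_apply, Matrix.one_apply_eq]
    simp
  · rw [RingHom.mapMatrix_apply, Matrix.map_apply, charmatrix_apply_ne _ _ _ h, Matrix.sub_apply,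
      Matrix.smul_apply, Matrix.one_apply_ne h]
    simp

lemma key (n : ℕ) (a : Fin n → ℤ) (A : Matrix (Fin n) (Fin n) ℤ)
    (hA : A.charpoly = ∏ i, (X - C (a i))) :
    ∃ P : (Matrix (Fin n) (Fin n) ℤ)ˣ,
      ((P : Matrix (Fin n) (Fin n) ℤ) * A * ((P⁻¹ : (Matrix (Fin n) (Fin n) ℤ)ˣ) :
          Matrix (Fin n) (Fin n) ℤ)).BlockTriangular id ∧
      ∀ i, ((P : Matrix (Fin n) (Fin n) ℤ) * A * ((P⁻¹ : (Matrix (Fin n) (Fin n) ℤ)ˣ) :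
          Matrix (Fin n) (Fin n) ℤ)) i i = a i := by
  induction n with
  | zero => exact ⟨1, fun i => i.elim0, fun i => i.elim0⟩
  | succ n IH =>
    -- find an integer eigenvector for a 0
    have hdet : ((a 0) • (1 : Matrix (Fin (n+1)) (Fin (n+1)) ℤ) - A).det = 0 := by
      rw [← eval_charpoly', hA, eval_prod]
      apply Finset.prod_eq_zero (Finset.mem_univ 0)
      simp
    obtain ⟨v, hv0, hv⟩ := (Matrix.exists_mulVec_eq_zero_iff).mpr hdet
    set N : Submodule ℤ (Fin (n+1) → ℤ) :=
      LinearMap.ker ((((a 0) • (1 : Matrix (Fin (n+1)) (Fin (n+1)) ℤ) - A)).mulVecLin) with hN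
    have hvN : v ∈ N := by
      rw [hN, LinearMap.mem_ker, Matrix.mulVecLin_apply]; exact hv
    obtain ⟨r, snf⟩ := N.smithNormalForm (Pi.basisFun ℤ (Fin (n+1)))
    rcases r with _ | r
    · haveI : Nontrivial N := nontrivial_of_ne ⟨v, hvN⟩ 0 (by simpa using hv0)
      exact ((Module.Basis.index_nonempty snf.bN).elim (fun i => i.elim0))
    -- the basis vector w is an eigenvector
    set w : Fin (n+1) → ℤ := snf.bM (snf.f 0) with hw
    have haQ : snf.a 0 ≠ 0 := by
      intro h
      apply Module.Basis.ne_zero snf.bN 0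
      have h2 := snf.snf 0
      rw [h, zero_smul] at h2
      exact Subtype.ext h2
    have hwN : (snf.a 0) • w ∈ N := by rw [← snf.snf 0]; exact (snf.bN 0).2
    have hAw : A.mulVec w = (a 0) • w := by
      have h1 : ((a 0) • (1 : Matrix (Fin (n+1)) (Fin (n+1)) ℤ) - A).mulVec w = 0 := by
        have h2 := LinearMap.mem_ker.mp hwN
        rw [_root_.map_smul, Matrix.mulVecLin_apply] at h2
        exact (smul_eq_zero.mp h2).resolve_left haQ
      rw [Matrix.sub_mulVec, Matrix.smul_mulVec, Matrix.one_mulVec] at h1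
      exact (sub_eq_zero.mp h1).symm
    -- a basis of ℤ^(n+1) whose 0th vector is w
    set b : Module.Basis (Fin (n+1)) ℤ (Fin (n+1) → ℤ) :=
      snf.bM.reindex (Equiv.swap (snf.f 0) 0) with hb
    have hb0 : b 0 = w := by
      rw [hb, Module.Basis.reindex_apply, Equiv.symm_swap, Equiv.swap_apply_right]
    set U : (Matrix (Fin (n+1)) (Fin (n+1)) ℤ)ˣ :=
      ⟨b.toMatrix (Pi.basisFun ℤ (Fin (n+1))), (Pi.basisFun ℤ (Fin (n+1))).toMatrix b,
        Module.Basis.toMatrix_mul_toMatrix_flip _ _, Module.Basis.toMatrix_mul_toMatrix_flip _ _⟩ with hU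
    set f : ((Fin (n+1) → ℤ) →ₗ[ℤ] (Fin (n+1) → ℤ)) :=
      Matrix.toLin (Pi.basisFun ℤ (Fin (n+1))) (Pi.basisFun ℤ (Fin (n+1))) A with hf
    have hfap : ∀ x, f x = A.mulVec x := by
      intro x
      rw [hf, Matrix.toLin_eq_toLin', Matrix.toLin'_apply]
    set M' : Matrix (Fin (n+1)) (Fin (n+1)) ℤ :=
      (U : Matrix (Fin (n+1)) (Fin (n+1)) ℤ) * A *
        ((U⁻¹ : (Matrix (Fin (n+1)) (Fin (n+1)) ℤ)ˣ) : Matrix (Fin (n+1)) (Fin (n+1)) ℤ) with hM'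
    have hM'eq : M' = LinearMap.toMatrix b b f := by
      rw [hM']
      have h1 : ((U⁻¹ : (Matrix (Fin (n+1)) (Fin (n+1)) ℤ)ˣ) : Matrix (Fin (n+1)) (Fin (n+1)) ℤ)
          = (Pi.basisFun ℤ (Fin (n+1))).toMatrix b := rfl
      have h2 : (U : Matrix (Fin (n+1)) (Fin (n+1)) ℤ)
          = b.toMatrix (Pi.basisFun ℤ (Fin (n+1))) := rfl
      rw [h1, h2]
      conv_lhs => rw [show A = LinearMap.toMatrix (Pi.basisFun ℤ (Fin (n+1)))
        (Pi.basisFun ℤ (Fin (n+1))) f from (LinearMap.toMatrix_toLin _ _ A).symm]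
      exact basis_toMatrix_mul_linearMap_toMatrix_mul_basis_toMatrix _ _ _ _ _
    have hcol : ∀ i, M' i 0 = if i = 0 then a 0 else 0 := by
      intro i
      rw [hM'eq, LinearMap.toMatrix_apply, hb0, hfap, hAw, ← hb0, _root_.map_smul,
        Module.Basis.repr_self]
      simp [Finsupp.single_apply, eq_comm]
    have hfc : f.charpoly = A.charpoly := by
      conv_rhs => rw [show A = LinearMap.toMatrix (Pi.basisFun ℤ (Fin (n+1)))
        (Pi.basisFun ℤ (Fin (n+1))) f from (LinearMap.toMatrix_toLin _ _ A).symm]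
      rw [LinearMap.charpoly_toMatrix]
    have hchar : M'.charpoly = ∏ i, (X - C (a i)) := by
      rw [hM'eq, LinearMap.charpoly_toMatrix, hfc, hA]
    set B : Matrix (Fin n) (Fin n) ℤ := M'.submatrix Fin.succ Fin.succ with hB
    have hcol' : ∀ i : Fin n, charmatrix M' i.succ 0 = 0 := by
      intro i
      rw [charmatrix_apply_ne _ _ _ (Fin.succ_ne_zero i), hcol, if_neg (Fin.succ_ne_zero i)]
      simp
    have hsub : (charmatrix M').submatrix (Fin.succAbove 0) Fin.succ = charmatrix B := by
      rw [Fin.succAbove_zero]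
      ext i j
      by_cases hij : i = j
      · subst hij
        rw [Matrix.submatrix_apply, charmatrix_apply_eq, charmatrix_apply_eq, hB,
          Matrix.submatrix_apply]
      · rw [Matrix.submatrix_apply,
          charmatrix_apply_ne _ _ _ (fun h => hij (Fin.succ_injective n h)),
          charmatrix_apply_ne _ _ _ hij, hB, Matrix.submatrix_apply]
    have hsplit : M'.charpoly = (X - C (a 0)) * B.charpoly := by
      rw [Matrix.charpoly, Matrix.det_succ_column_zero, Finset.sum_eq_single 0]
      · rw [show charmatrix M' 0 0 = X - C (a 0) by
          rw [charmatrix_apply_eq, hcol 0, if_pos rfl], hsub]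
        simp [Matrix.charpoly]
      · intro i _ hi
        induction i using Fin.cases with
        | zero => exact absurd rfl hi
        | succ i' => rw [hcol' i']; ring
      · intro h; exact absurd (Finset.mem_univ 0) h
    have hBchar : B.charpoly = ∏ i : Fin n, (X - C (a i.succ)) := by
      have h3 := hchar
      rw [hsplit, Fin.prod_univ_succ] at h3
      exact mul_left_cancel₀ (Polynomial.X_sub_C_ne_zero (a 0)) h3
    obtain ⟨Q, hQtri, hQdiag⟩ := IH (fun i => a i.succ) B hBchar
    set Qm : Matrix (Fin n) (Fin n) ℤ := (Q : Matrix (Fin n) (Fin n) ℤ) with hQm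
    set Qi : Matrix (Fin n) (Fin n) ℤ := ((Q⁻¹ : (Matrix (Fin n) (Fin n) ℤ)ˣ) :
      Matrix (Fin n) (Fin n) ℤ) with hQi
    set Z : Matrix (Fin (n+1)) (Fin (n+1)) ℤ := padOne Qm * M' * padOne Qi with hZ
    have hPM : ∀ (i : Fin n) (k : Fin (n+1)),
        (padOne Qm * M') i.succ k = ∑ l : Fin n, Qm i l * M' l.succ k := by
      intro i k
      rw [Matrix.mul_apply, Fin.sum_univ_succ]
      simp
    have hZcol : ∀ i : Fin (n+1), Z i 0 = (padOne Qm * M') i 0 := by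
      intro i
      rw [hZ, Matrix.mul_apply, Fin.sum_univ_succ]
      simp
    have hZ00 : Z 0 0 = a 0 := by
      rw [hZcol, Matrix.mul_apply, Fin.sum_univ_succ]
      simp [hcol, Fin.succ_ne_zero]
    have hZs0 : ∀ i : Fin n, Z i.succ 0 = 0 := by
      intro i
      rw [hZcol, hPM]
      simp [hcol, Fin.succ_ne_zero]
    have hZss : ∀ i j : Fin n, Z i.succ j.succ = (Qm * B * Qi) i j := by
      intro i j
      rw [hZ, Matrix.mul_apply, Fin.sum_univ_succ]
      have h4 : ∀ k : Fin n, (padOne Qm * M') i.succ k.succ = (Qm * B) i k := by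
        intro k
        rw [hPM, Matrix.mul_apply]
        apply Finset.sum_congr rfl
        intro l _
        rw [hB, Matrix.submatrix_apply]
      simp only [padOne_zero_succ, mul_zero, zero_add, padOne_succ_succ, h4]
      rw [Matrix.mul_apply]
    have hPA : ((padOneU Q * U : (Matrix (Fin (n+1)) (Fin (n+1)) ℤ)ˣ) :
        Matrix (Fin (n+1)) (Fin (n+1)) ℤ) * A *
        (((padOneU Q * U)⁻¹ : (Matrix (Fin (n+1)) (Fin (n+1)) ℤ)ˣ) :
        Matrix (Fin (n+1)) (Fin (n+1)) ℤ) = Z := by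
      rw [_root_.mul_inv_rev, Units.val_mul, Units.val_mul, hZ, hM']
      show padOne Qm * (↑U : Matrix (Fin (n+1)) (Fin (n+1)) ℤ) * A *
        ((↑U⁻¹ : Matrix (Fin (n+1)) (Fin (n+1)) ℤ) * padOne Qi) = _
      simp only [mul_assoc]
    refine ⟨padOneU Q * U, ?_, ?_⟩
    · rw [hPA]
      intro i j hij
      induction j using Fin.cases with
      | zero =>
        induction i using Fin.cases with
        | zero => exact absurd hij (lt_irrefl _)
        | succ i' => exact hZs0 i'
      | succ j' =>
        induction i using Fin.cases with
        | zero => exact absurd hij (Fin.not_lt_zero _)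
        | succ i' =>
          rw [hZss]
          exact hQtri (show (id j' : Fin n) < id i' by
            simpa [Fin.succ_lt_succ_iff] using hij)
    · intro i
      rw [hPA]
      induction i using Fin.cases with
      | zero => exact hZ00
      | succ i' =>
        rw [hZss]
        exact hQdiag i'

/-- A matrix over `ℤ` with characteristic polynomial `(x - a 1)⋯(x - a n)`,
where `a 1 < ⋯ < a n` are integers, is conjugate over `ℤ` to an upper triangular
matrix with diagonal entries `a 1, ..., a n` in that order. -/
theorem stmt_2 (n : ℕ) (a : Fin n → ℤ) (ha : StrictMono a)
    (A : Matrix (Fin n) (Fin n) ℤ)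
    (hA : A.charpoly = ∏ i, (X - C (a i))) :
    ∃ P : Matrix.GeneralLinearGroup (Fin n) ℤ,
      ((P : Matrix (Fin n) (Fin n) ℤ) * A * ((P⁻¹ : Matrix.GeneralLinearGroup (Fin n) ℤ) :
          Matrix (Fin n) (Fin n) ℤ)).BlockTriangular id ∧
      ∀ i, ((P : Matrix (Fin n) (Fin n) ℤ) * A * ((P⁻¹ : Matrix.GeneralLinearGroup (Fin n) ℤ) :
          Matrix (Fin n) (Fin n) ℤ)) i i = a i := by
  exact key n a A hA
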